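/- Let P be a Markov operator on L²(μ) with μ stationary (so ‖P g‖_μ ≤ ‖g‖_μ for all g), and let H ⊆ L²(μ) be a closed subspace with orthogonal projection Π_H. Let T_w be a γ̄-contractive affine operator on L²(μ) (i.e., ‖T_w f − T_w g‖_μ ≤ γ̄ ‖f − g‖_μ with γ̄ ∈ [0,1)) with unique fixed point V*, and let θ* be the unique fixed point of Π_H ∘ T_w. Then ‖θ* − V*‖²_μ ≤ (1 − γ̄)^{−1} ‖Π_H V* − V*‖²_μ. -/

import Mathlib

/-- projected fixed point approximation bound. If `T` is a `γ̄`-contraction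
on a Hilbert space with fixed point `V`, and `θ` is the fixed point of `Π_H ∘ T` for the
orthogonal projection `Π_H` onto a closed subspace `H`, then
`‖θ - V‖² ≤ (1 - γ̄)⁻¹ ‖Π_H V - V‖²`. -/
theorem stmt4 {E : Type*} [NormedAddCommGroup E] [InnerProductSpace ℝ E] [CompleteSpace E]
    (H : Submodule ℝ E) [CompleteSpace H]
    (T : E → E) (γbar : ℝ) (h0 : 0 ≤ γbar) (h1 : γbar < 1)
    (hT : ∀ f g : E, ‖T f - T g‖ ≤ γbar * ‖f - g‖)
    (V θ : E) (hV : T V = V) (hθ : (H.orthogonalProjectionOnto (T θ) : E) = θ) :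
    ‖θ - V‖ ^ 2 ≤ (1 - γbar)⁻¹ * ‖(H.orthogonalProjectionOnto V : E) - V‖ ^ 2 := by
  set PV : E := (H.orthogonalProjectionOnto V : E) with hPV
  have hθH : θ ∈ H := by rw [← hθ]; exact (H.orthogonalProjectionOnto (T θ)).2
  -- inner term zero
  have hmem : θ - PV ∈ H := H.sub_mem hθH (H.orthogonalProjectionOnto V).2
  have horth : V - PV ∈ Hᗮ := Submodule.sub_starProjection_mem_orthogonal (K := H) V
  have hinner : inner ℝ (θ - PV) (PV - V) = (0 : ℝ) := by
    have hz : inner ℝ (θ - PV) (V - PV) = (0:ℝ) := horth (θ - PV) hmem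
    have he : (PV - V) = -(V - PV) := by abel
    rw [he, inner_neg_right, hz, neg_zero]
  have pyth : ‖θ - V‖ ^ 2 = ‖θ - PV‖ ^ 2 + ‖PV - V‖ ^ 2 := by
    have : θ - V = (θ - PV) + (PV - V) := by abel
    rw [this, norm_add_sq_real, hinner]; ring
  -- contraction bound
  have hcontr : ‖θ - PV‖ ≤ γbar * ‖θ - V‖ := by
    have hproj : ‖(H.orthogonalProjectionOnto (T θ) : E) - (H.orthogonalProjectionOnto (T V) : E)‖
        ≤ ‖T θ - T V‖ := by
      have := Submodule.orthogonalProjectionOnto_norm_le H (𝕜 := ℝ)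
      calc ‖(H.orthogonalProjectionOnto (T θ) : E) - (H.orthogonalProjectionOnto (T V) : E)‖
          = ‖(H.orthogonalProjectionOnto (T θ - T V) : E)‖ := by rw [map_sub]; rfl
        _ ≤ ‖T θ - T V‖ := by
            simpa using H.orthogonalProjectionOnto.le_opNorm (T θ - T V) |>.trans
              (by nlinarith [norm_nonneg (T θ - T V),
                Submodule.orthogonalProjectionOnto_norm_le H (𝕜 := ℝ)])
    calc ‖θ - PV‖ = ‖(H.orthogonalProjectionOnto (T θ) : E) - (H.orthogonalProjectionOnto (T V) : E)‖ := by
            rw [hθ, hV]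
      _ ≤ ‖T θ - T V‖ := hproj
      _ ≤ γbar * ‖θ - V‖ := hT θ V
  have hsq : ‖θ - PV‖ ^ 2 ≤ γbar ^ 2 * ‖θ - V‖ ^ 2 := by
    nlinarith [norm_nonneg (θ - PV), norm_nonneg (θ - V)]
  have key : (1 - γbar ^ 2) * ‖θ - V‖ ^ 2 ≤ ‖PV - V‖ ^ 2 := by nlinarith
  have h12 : γbar ^ 2 ≤ γbar := by nlinarith
  have hpos : 0 < 1 - γbar := by linarith
  have : (1 - γbar) * ‖θ - V‖ ^ 2 ≤ ‖PV - V‖ ^ 2 := by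
    nlinarith [sq_nonneg ‖θ - V‖]
  rw [inv_mul_eq_div, le_div_iff₀ hpos]
  linarith [this]
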